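/- Let s ≤ t be real numbers and let U, a, b, ϱ : [s,t] × ℝ → ℝ be continuous functions, 2π-periodic in the second (spatial) variable, with ϱ continuously differentiable in time and twice continuously differentiable in space with jointly continuous derivatives. Assume ϱ(s,z) = 0 for all z, and that ∂_r ϱ(r,z) = ∂_z²ϱ(r,z) + ϱ(r,z) − 3U(r,z)²ϱ(r,z) − 6U(r,z)a(r,z)b(r,z) for all (r,z). Then ∫₀^{2π} ϱ(t,z)² dz ≤ 12 ∫_s^t e^{2(t−r)} (sup_{z∈ℝ} a(r,z)²) (∫₀^{2π} b(r,z)² dz) dr. -/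

import Mathlib

open MeasureTheory Set intervalIntegral

lemma sv_slice_cont {f : ℝ → ℝ → ℝ} {s t : ℝ}
    (hf : ContinuousOn (fun p : ℝ × ℝ => f p.1 p.2) (Set.Icc s t ×ˢ Set.univ))
    {x : ℝ} (hx : x ∈ Set.Icc s t) : Continuous fun z => f x z := by
  rw [← continuousOn_univ]
  exact hf.comp (Continuous.continuousOn (continuous_const.prodMk continuous_id)) (fun z _ => ⟨hx, trivial⟩)

lemma sv_time_cont {f : ℝ → ℝ → ℝ} {s t : ℝ}
    (hf : ContinuousOn (fun p : ℝ × ℝ => f p.1 p.2) (Set.Icc s t ×ˢ Set.univ))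
    (z : ℝ) : ContinuousOn (fun x => f x z) (Set.Icc s t) :=
  hf.comp (Continuous.continuousOn (continuous_id.prodMk continuous_const)) (fun x hx => ⟨hx, trivial⟩)

lemma sv_bound {f : ℝ → ℝ → ℝ} {s t : ℝ} (T : ℝ)
    (hf : ContinuousOn (fun p : ℝ × ℝ => f p.1 p.2) (Set.Icc s t ×ˢ Set.univ)) :
    ∃ C, ∀ x ∈ Set.Icc s t, ∀ z ∈ Set.Icc 0 T, |f x z| ≤ C := by
  obtain ⟨C, hC⟩ := (IsCompact.prod isCompact_Icc isCompact_Icc).exists_bound_of_continuousOn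
    (hf.mono (Set.prod_mono_right (Set.subset_univ _)))
  exact ⟨C, fun x hx z hz => hC (x, z) ⟨hx, hz⟩⟩

lemma sv_contOn_integral {f : ℝ → ℝ → ℝ} {s t : ℝ} (T : ℝ) (hT : 0 ≤ T)
    (hf : ContinuousOn (fun p : ℝ × ℝ => f p.1 p.2) (Set.Icc s t ×ˢ Set.univ)) :
    ContinuousOn (fun r => ∫ z in (0:ℝ)..T, f r z) (Set.Icc s t) := by
  obtain ⟨C, hC⟩ := sv_bound T hf
  intro x₀ hx₀
  have hmem : ∀ᶠ x in nhdsWithin x₀ (Set.Icc s t), x ∈ Set.Icc s t :=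
    eventually_mem_nhdsWithin
  refine continuousWithinAt_of_dominated_interval
    (hmem.mono fun x hx => ((sv_slice_cont hf hx).aestronglyMeasurable).restrict)
    (hmem.mono fun x hx => ?_) (_root_.intervalIntegrable_const (c := C)) ?_
  · filter_upwards with z hz
    have hz' : z ∈ Set.Icc 0 T := by
      rw [Set.uIoc_of_le hT] at hz; exact ⟨le_of_lt hz.1, hz.2⟩
    simpa [Real.norm_eq_abs] using hC x hx z hz'
  · filter_upwards with z hz
    exact (sv_time_cont hf z).continuousWithinAt hx₀

lemma sv_range_eq {a : ℝ → ℝ → ℝ} {s t T : ℝ} (hT : 0 < T)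
    (haper : ∀ r ∈ Set.Icc s t, ∀ z, a r (z + T) = a r z) {r : ℝ} (hr : r ∈ Set.Icc s t) :
    Set.range (fun z => (a r z) ^ 2) = (fun z => (a r z) ^ 2) '' Set.Icc 0 T := by
  apply Set.Subset.antisymm
  · rintro v ⟨z, rfl⟩
    have hper : Function.Periodic (fun z => (a r z) ^ 2) T := fun z => by
      simp [haper r hr z]
    obtain ⟨y, hy, hyz⟩ := hper.exists_mem_Ico₀ hT z
    exact ⟨y, ⟨hy.1, hy.2.le⟩, hyz.symm⟩
  · exact Set.image_subset_range _ _

lemma sv_iSup_eq {a : ℝ → ℝ → ℝ} {s t T : ℝ} (hT : 0 < T)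
    (haper : ∀ r ∈ Set.Icc s t, ∀ z, a r (z + T) = a r z) {r : ℝ} (hr : r ∈ Set.Icc s t) :
    (⨆ z : ℝ, (a r z) ^ 2) = sSup ((fun z => (a r z) ^ 2) '' Set.Icc 0 T) := by
  rw [iSup, sv_range_eq hT haper hr]

lemma sv_bddAbove {a : ℝ → ℝ → ℝ} {s t T : ℝ} (hT : 0 < T)
    (hacont : ContinuousOn (fun p : ℝ × ℝ => a p.1 p.2) (Set.Icc s t ×ˢ Set.univ))
    (haper : ∀ r ∈ Set.Icc s t, ∀ z, a r (z + T) = a r z) {r : ℝ} (hr : r ∈ Set.Icc s t) :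
    BddAbove (Set.range fun z => (a r z) ^ 2) := by
  rw [sv_range_eq hT haper hr]
  exact IsCompact.bddAbove_image isCompact_Icc
    (((sv_slice_cont hacont hr).pow 2).continuousOn)

lemma sv_S_cont {a : ℝ → ℝ → ℝ} {s t T : ℝ} (hT : 0 < T)
    (hacont : ContinuousOn (fun p : ℝ × ℝ => a p.1 p.2) (Set.Icc s t ×ˢ Set.univ))
    (haper : ∀ r ∈ Set.Icc s t, ∀ z, a r (z + T) = a r z) :
    ContinuousOn (fun r => ⨆ z : ℝ, (a r z) ^ 2) (Set.Icc s t) := by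
  rw [continuousOn_iff_continuous_restrict]
  have hF : Continuous (↿fun (x : Set.Icc s t) (z : ℝ) => (a x.1 z) ^ 2) := by
    have hm : Continuous fun p : Set.Icc s t × ℝ => ((p.1 : ℝ), p.2) :=
      (continuous_subtype_val.comp continuous_fst).prodMk continuous_snd
    have : Continuous fun p : Set.Icc s t × ℝ => a (p.1 : ℝ) p.2 :=
      hacont.comp_continuous hm (fun p => ⟨p.1.2, trivial⟩)
    exact this.pow 2
  have hc := IsCompact.continuous_sSup (isCompact_Icc (a := (0:ℝ)) (b := T)) hF
  convert hc using 1
  funext x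
  exact sv_iSup_eq hT haper x.2

/-- Energy inequality for the second variation equation
`∂_r ϱ = ∂_z²ϱ + ϱ − 3U²ϱ − 6·U·a·b` on `[s,t] × ℝ` with `2π`-periodicity in
space and `ϱ(s,·) = 0`:
`∫₀^{2π} ϱ(t,z)² dz ≤ 12 ∫_s^t e^{2(t−r)} (sup_z a(r,z)²)(∫₀^{2π} b(r,z)² dz) dr`. -/
theorem stmt_7 (s t : ℝ) (hst : s ≤ t)
    (U a b ϱ ϱt ϱz ϱzz : ℝ → ℝ → ℝ)
    (hUcont : ContinuousOn (fun p : ℝ × ℝ => U p.1 p.2) (Set.Icc s t ×ˢ Set.univ))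
    (hacont : ContinuousOn (fun p : ℝ × ℝ => a p.1 p.2) (Set.Icc s t ×ˢ Set.univ))
    (hbcont : ContinuousOn (fun p : ℝ × ℝ => b p.1 p.2) (Set.Icc s t ×ˢ Set.univ))
    (hϱcont : ContinuousOn (fun p : ℝ × ℝ => ϱ p.1 p.2) (Set.Icc s t ×ˢ Set.univ))
    (hϱtcont : ContinuousOn (fun p : ℝ × ℝ => ϱt p.1 p.2) (Set.Icc s t ×ˢ Set.univ))
    (hϱzcont : ContinuousOn (fun p : ℝ × ℝ => ϱz p.1 p.2) (Set.Icc s t ×ˢ Set.univ))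
    (hϱzzcont : ContinuousOn (fun p : ℝ × ℝ => ϱzz p.1 p.2) (Set.Icc s t ×ˢ Set.univ))
    (hUper : ∀ r ∈ Set.Icc s t, ∀ z : ℝ, U r (z + 2 * Real.pi) = U r z)
    (haper : ∀ r ∈ Set.Icc s t, ∀ z : ℝ, a r (z + 2 * Real.pi) = a r z)
    (hbper : ∀ r ∈ Set.Icc s t, ∀ z : ℝ, b r (z + 2 * Real.pi) = b r z)
    (hϱper : ∀ r ∈ Set.Icc s t, ∀ z : ℝ, ϱ r (z + 2 * Real.pi) = ϱ r z)
    (hϱt : ∀ r ∈ Set.Icc s t, ∀ z : ℝ, HasDerivAt (fun r' => ϱ r' z) (ϱt r z) r)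
    (hϱz : ∀ r ∈ Set.Icc s t, ∀ z : ℝ, HasDerivAt (fun z' => ϱ r z') (ϱz r z) z)
    (hϱzz : ∀ r ∈ Set.Icc s t, ∀ z : ℝ, HasDerivAt (fun z' => ϱz r z') (ϱzz r z) z)
    (hinit : ∀ z : ℝ, ϱ s z = 0)
    (hpde : ∀ r ∈ Set.Icc s t, ∀ z : ℝ,
      ϱt r z = ϱzz r z + ϱ r z - 3 * (U r z) ^ 2 * ϱ r z - 6 * U r z * a r z * b r z) :
    ∫ z in (0 : ℝ)..(2 * Real.pi), (ϱ t z) ^ 2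
      ≤ 12 * ∫ r in s..t,
          Real.exp (2 * (t - r)) * (⨆ z : ℝ, (a r z) ^ 2)
            * ∫ z in (0 : ℝ)..(2 * Real.pi), (b r z) ^ 2 := by
  set T := 2 * Real.pi with hTdef
  have hT : 0 < T := by rw [hTdef]; positivity
  have hT0 : (0:ℝ) ≤ T := hT.le
  have hts : t ∈ Set.Icc s t := ⟨hst, le_refl t⟩
  have hss : s ∈ Set.Icc s t := ⟨le_refl s, hst⟩
  set E : ℝ → ℝ := fun r => ∫ z in (0:ℝ)..T, (ϱ r z) ^ 2 with hEdef
  set B : ℝ → ℝ := fun r => ∫ z in (0:ℝ)..T, (b r z) ^ 2 with hBdef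
  set S : ℝ → ℝ := fun r => ⨆ z : ℝ, (a r z) ^ 2 with hSdef
  set g : ℝ → ℝ := fun u => Real.exp (-(2*u)) * (S u * B u) with hgdef
  -- continuity facts
  have hEcont : ContinuousOn E (Set.Icc s t) := sv_contOn_integral T hT0 (hϱcont.pow 2)
  have hBcont : ContinuousOn B (Set.Icc s t) := sv_contOn_integral T hT0 (hbcont.pow 2)
  have hScont : ContinuousOn S (Set.Icc s t) := sv_S_cont hT hacont haper
  have hSnonneg : ∀ r ∈ Set.Icc s t, 0 ≤ S r := fun r hr =>
    (sq_nonneg (a r 0)).trans (le_ciSup (sv_bddAbove hT hacont haper hr) 0)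
  have hSle : ∀ r ∈ Set.Icc s t, ∀ z : ℝ, (a r z) ^ 2 ≤ S r := fun r hr z =>
    le_ciSup (sv_bddAbove hT hacont haper hr) z
  have hBnonneg : ∀ r : ℝ, 0 ≤ B r := fun r =>
    intervalIntegral.integral_nonneg hT0 (fun z _ => sq_nonneg _)
  have hgcont : ContinuousOn g (Set.Icc s t) :=
    ((Real.continuous_exp.comp (continuous_const.mul continuous_id).neg).continuousOn).mul
      (hScont.mul hBcont)
  have hgint : IntervalIntegrable g volume s t := by
    apply ContinuousOn.intervalIntegrable
    rwa [Set.uIcc_of_le hst]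
  -- periodicity of ϱz
  have hϱzper : ∀ r ∈ Set.Icc s t, ∀ z : ℝ, ϱz r (z + T) = ϱz r z := by
    intro r hr z
    have h1 : HasDerivAt (fun z' => ϱ r (z' + T)) (ϱz r (z + T)) z := by
      simpa [Function.comp_def] using (hϱz r hr (z + T)).comp z ((hasDerivAt_id z).add_const T)
    have h2 : HasDerivAt (fun z' => ϱ r (z' + T)) (ϱz r z) z := by
      have heq : (fun z' => ϱ r (z' + T)) = fun z' => ϱ r z' := funext (hϱper r hr)
      rw [heq]; exact hϱz r hr z
    exact h1.unique h2
  -- derivative of E at interior points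
  obtain ⟨C, hC⟩ := sv_bound (f := fun x z => 2 * ϱ x z * ϱt x z) T
    ((continuous_const.continuousOn.mul hϱcont).mul hϱtcont)
  have hEderiv : ∀ r ∈ Set.Ioo s t,
      HasDerivAt E (∫ z in (0:ℝ)..T, 2 * ϱ r z * ϱt r z) r := by
    intro r hr
    have hε : 0 < min (r - s) (t - r) := lt_min (by linarith [hr.1]) (by linarith [hr.2])
    have hball : Metric.ball r (min (r - s) (t - r)) ⊆ Set.Icc s t := by
      intro x hx
      rw [Metric.mem_ball, Real.dist_eq, abs_sub_lt_iff] at hx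
      constructor
      · nlinarith [lt_of_lt_of_le hx.2 (min_le_left _ _)]
      · nlinarith [lt_of_lt_of_le hx.1 (min_le_right _ _)]
    have key := intervalIntegral.hasDerivAt_integral_of_dominated_loc_of_deriv_le
      (F := fun x z => (ϱ x z) ^ 2) (F' := fun x z => 2 * ϱ x z * ϱt x z)
      (x₀ := r) (a := (0:ℝ)) (b := T) (μ := volume) (bound := fun _ => C) (Metric.ball_mem_nhds r hε)
      ?_ ?_ ?_ ?_ ?_ ?_
    · exact key.2
    · filter_upwards [(isOpen_Ioo (a := s) (b := t)).mem_nhds hr] with x hx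
      exact (((sv_slice_cont hϱcont (Set.Ioo_subset_Icc_self hx)).pow 2).aestronglyMeasurable).restrict
    · exact ((sv_slice_cont hϱcont (Set.Ioo_subset_Icc_self hr)).pow 2).intervalIntegrable _ _
    · exact ((continuous_const.mul (sv_slice_cont hϱcont (Set.Ioo_subset_Icc_self hr))).mul
        (sv_slice_cont hϱtcont (Set.Ioo_subset_Icc_self hr))).aestronglyMeasurable.restrict
    · filter_upwards with z hz x hx
      have hz' : z ∈ Set.Icc 0 T := by
        rw [Set.uIoc_of_le hT0] at hz; exact ⟨hz.1.le, hz.2⟩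
      rw [Real.norm_eq_abs]
      exact hC x (hball hx) z hz'
    · exact _root_.intervalIntegrable_const
    · filter_upwards with z hz x hx
      have hx' : x ∈ Set.Icc s t := hball hx
      have := (hϱt x hx' z).fun_pow 2
      exact this.congr_deriv (by norm_num)
  -- energy inequality for the derivative
  have hE'le : ∀ r ∈ Set.Icc s t,
      (∫ z in (0:ℝ)..T, 2 * ϱ r z * ϱt r z) ≤ 2 * E r + 6 * (S r * B r) := by
    intro r hr
    have cϱ := sv_slice_cont hϱcont hr
    have cϱz := sv_slice_cont hϱzcont hr
    have cϱzz := sv_slice_cont hϱzzcont hr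
    have cU := sv_slice_cont hUcont hr
    have ca := sv_slice_cont hacont hr
    have cb := sv_slice_cont hbcont hr
    -- integration by parts
    have hibp : ∫ z in (0:ℝ)..T, ϱ r z * ϱzz r z
        = ϱ r T * ϱz r T - ϱ r 0 * ϱz r 0 - ∫ z in (0:ℝ)..T, ϱz r z * ϱz r z :=
      intervalIntegral.integral_mul_deriv_eq_deriv_mul
        (fun x _ => hϱz r hr x) (fun x _ => hϱzz r hr x)
        (cϱz.intervalIntegrable (μ := volume) _ _) (cϱzz.intervalIntegrable (μ := volume) _ _)
    have hbT : ϱ r T = ϱ r 0 := by simpa using hϱper r hr 0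
    have hbTz : ϱz r T = ϱz r 0 := by simpa using hϱzper r hr 0
    rw [hbT, hbTz] at hibp
    have hibp' : ∫ z in (0:ℝ)..T, ϱ r z * ϱzz r z
        = -∫ z in (0:ℝ)..T, ϱz r z * ϱz r z := by rw [hibp]; ring
    -- split the integral
    have h1int : IntervalIntegrable (fun z => ϱ r z * ϱzz r z) volume 0 T :=
      (cϱ.mul cϱzz).intervalIntegrable _ _
    have h2cont : Continuous (fun z => 2*(ϱ r z)^2 - 6*(U r z)^2*(ϱ r z)^2
        - 12*U r z*ϱ r z*a r z*b r z) := by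
      exact ((continuous_const.mul (cϱ.pow 2)).sub
        ((continuous_const.mul (cU.pow 2)).mul (cϱ.pow 2))).sub
        ((((continuous_const.mul cU).mul cϱ).mul ca).mul cb)
    have h2int := h2cont.intervalIntegrable (μ := volume) (0:ℝ) T
    have h3cont : Continuous (fun z => 2*(ϱ r z)^2 + 6*S r*(b r z)^2) :=
      (continuous_const.mul (cϱ.pow 2)).add (continuous_const.mul (cb.pow 2))
    have h3int := h3cont.intervalIntegrable (μ := volume) (0:ℝ) T
    have hsplit : (∫ z in (0:ℝ)..T, 2 * ϱ r z * ϱt r z)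
        = 2 * (∫ z in (0:ℝ)..T, ϱ r z * ϱzz r z)
          + ∫ z in (0:ℝ)..T, (2*(ϱ r z)^2 - 6*(U r z)^2*(ϱ r z)^2
              - 12*U r z*ϱ r z*a r z*b r z) := by
      rw [← intervalIntegral.integral_const_mul,
        ← intervalIntegral.integral_add (h1int.const_mul 2) h2int]
      apply intervalIntegral.integral_congr
      intro z _
      show 2 * ϱ r z * ϱt r z = 2 * (ϱ r z * ϱzz r z) + (2*(ϱ r z)^2
        - 6*(U r z)^2*(ϱ r z)^2 - 12*U r z*ϱ r z*a r z*b r z)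
      rw [hpde r hr z]
      ring
    have hneg : 2 * (∫ z in (0:ℝ)..T, ϱ r z * ϱzz r z) ≤ 0 := by
      rw [hibp']
      have : 0 ≤ ∫ z in (0:ℝ)..T, ϱz r z * ϱz r z :=
        intervalIntegral.integral_nonneg hT0 (fun z _ => mul_self_nonneg _)
      linarith
    have hrest : (∫ z in (0:ℝ)..T, (2*(ϱ r z)^2 - 6*(U r z)^2*(ϱ r z)^2
          - 12*U r z*ϱ r z*a r z*b r z))
        ≤ ∫ z in (0:ℝ)..T, (2*(ϱ r z)^2 + 6*S r*(b r z)^2) := by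
      apply intervalIntegral.integral_mono_on hT0 h2int h3int
      intro z hz
      nlinarith [sq_nonneg (U r z * ϱ r z + a r z * b r z),
        mul_le_mul_of_nonneg_right (hSle r hr z) (sq_nonneg (b r z))]
    have hRHS : (∫ z in (0:ℝ)..T, (2*(ϱ r z)^2 + 6*S r*(b r z)^2))
        = 2 * E r + 6 * (S r * B r) := by
      rw [intervalIntegral.integral_add ((cϱ.fun_pow 2).intervalIntegrable 0 T |>.const_mul 2)
        ((cb.fun_pow 2).intervalIntegrable 0 T |>.const_mul (6 * S r)),
        intervalIntegral.integral_const_mul, intervalIntegral.integral_const_mul]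
      show 2 * E r + 6 * S r * B r = _
      ring
    rw [hsplit]
    linarith
  -- the comparison function
  set Φ : ℝ → ℝ := fun r => Real.exp (-(2*r)) * E r - 6 * ∫ u in s..r, g u with hΦdef
  have hexpc : Continuous fun r : ℝ => Real.exp (-(2*r)) :=
    Real.continuous_exp.comp (continuous_const.mul continuous_id).neg
  have hprim : ContinuousOn (fun r => ∫ u in s..r, g u) (Set.Icc s t) := by
    have h := intervalIntegral.continuousOn_primitive_interval' hgint Set.left_mem_uIcc
    rwa [Set.uIcc_of_le hst] at h
  have hΦcont : ContinuousOn Φ (Set.Icc s t) :=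
    (hexpc.continuousOn.mul hEcont).sub (continuousOn_const.mul hprim)
  have hΦderiv : ∀ r ∈ Set.Ioo s t, HasDerivAt Φ
      ((-2) * Real.exp (-(2*r)) * E r
        + Real.exp (-(2*r)) * (∫ z in (0:ℝ)..T, 2 * ϱ r z * ϱt r z) - 6 * g r) r := by
    intro r hr
    have hd1 : HasDerivAt (fun r : ℝ => Real.exp (-(2*r))) ((-2) * Real.exp (-(2*r))) r := by
      have h : HasDerivAt (fun r : ℝ => -(2*r)) (-2) r := by
        simpa [Pi.neg_def] using ((hasDerivAt_id r).const_mul (2:ℝ)).neg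
      simpa [mul_comm] using h.exp
    have hd2 := hEderiv r hr
    have hd3 : HasDerivAt (fun r => ∫ u in s..r, g u) (g r) r := by
      apply intervalIntegral.integral_hasDerivAt_right
      · exact hgint.mono_set (Set.uIcc_subset_uIcc Set.left_mem_uIcc
          (by rw [Set.uIcc_of_le hst]; exact Set.Ioo_subset_Icc_self hr))
      · exact (hgcont.mono Set.Ioo_subset_Icc_self).stronglyMeasurableAtFilter isOpen_Ioo r hr
      · exact hgcont.continuousAt (Icc_mem_nhds hr.1 hr.2)
    exact (hd1.mul hd2).sub (hd3.const_mul 6)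
  have hΦmono : AntitoneOn Φ (Set.Icc s t) := by
    apply antitoneOn_of_deriv_nonpos (convex_Icc s t) hΦcont
    · intro x hx
      rw [interior_Icc] at hx
      exact (hΦderiv x hx).differentiableAt.differentiableWithinAt
    · intro x hx
      rw [interior_Icc] at hx
      rw [(hΦderiv x hx).deriv]
      have hE' := hE'le x (Set.Ioo_subset_Icc_self hx)
      have hexp : (0:ℝ) < Real.exp (-(2*x)) := Real.exp_pos _
      have hgx : g x = Real.exp (-(2*x)) * (S x * B x) := rfl
      rw [hgx]
      nlinarith [mul_le_mul_of_nonneg_left hE' hexp.le]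
  have hΦs : Φ s = 0 := by
    have hEs : E s = 0 := by
      show (∫ z in (0:ℝ)..T, (ϱ s z)^2) = 0
      have h0 : (fun z => (ϱ s z)^2) = fun _ => (0:ℝ) := funext fun z => by
        rw [hinit z]; ring
      rw [h0]
      simp
    show Real.exp (-(2*s)) * E s - 6 * ∫ u in s..s, g u = 0
    rw [hEs, intervalIntegral.integral_same]
    ring
  have hΦt : Φ t ≤ 0 := (hΦmono hss hts hst).trans_eq hΦs
  have hkey : Real.exp (-(2*t)) * E t ≤ 6 * ∫ u in s..t, g u := by
    have h : Real.exp (-(2*t)) * E t - 6 * ∫ u in s..t, g u ≤ 0 := hΦt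
    linarith
  have hJ : (∫ r in s..t, Real.exp (2*(t - r)) * S r * B r)
      = Real.exp (2*t) * ∫ u in s..t, g u := by
    rw [← intervalIntegral.integral_const_mul]
    apply intervalIntegral.integral_congr
    intro u _
    show Real.exp (2*(t-u)) * S u * B u
      = Real.exp (2*t) * (Real.exp (-(2*u)) * (S u * B u))
    rw [show (2*(t-u)) = 2*t + -(2*u) by ring, Real.exp_add]
    ring
  have hJnonneg : (0:ℝ) ≤ ∫ r in s..t, Real.exp (2*(t - r)) * S r * B r := by
    apply intervalIntegral.integral_nonneg hst
    intro u hu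
    have h1 := hSnonneg u hu
    have h2 := hBnonneg u
    positivity
  have hEt : E t ≤ 6 * ∫ r in s..t, Real.exp (2*(t - r)) * S r * B r := by
    rw [hJ]
    have h1 := mul_le_mul_of_nonneg_left hkey (Real.exp_nonneg (2*t))
    have h2 : Real.exp (2*t) * (Real.exp (-(2*t)) * E t) = E t := by
      rw [← mul_assoc, ← Real.exp_add]
      have h3 : 2*t + -(2*t) = 0 := by ring
      rw [h3, Real.exp_zero, one_mul]
    rw [h2] at h1
    linarith
  show E t ≤ 12 * ∫ r in s..t, Real.exp (2*(t - r)) * S r * B r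
  linarith
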